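/- Soundness of the abstraction for condition PC2 (core of the paper's soundness theorem): let (S, P) be a finite DTMC, h : S → Ŝ a surjective abstraction function, and C, E ⊆ S h-saturated cause and effect sets with Ĉ = h(C) and Ê = h(E). Suppose that in the induced abstract MDP, for abstract states ŝ, ŝ' ∈ Ŝ, the limit of the minimum until value iteration with avoid set Ê and target Ĉ at ŝ strictly exceeds the limit of the maximum until value iteration with avoid set Ĉ and target Ê at ŝ', i.e., ⨆ₙ minuntil_{Ê,Ĉ} n ŝ > ⨆ₙ maxuntil_{Ĉ,Ê} n ŝ'. Then for every concrete state s with h(s) = ŝ and every concrete state s' with h(s') = ŝ', the concrete probability of satisfying ¬E U C from s strictly exceeds the concrete probability of satisfying ¬C U E from s', i.e., PUntil_{E,C} s > PUntil_{C,E} s'. -/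
import Mathlib


open scoped Classical

/-- Concretization of an abstract state: `γ(t) = h⁻¹({t})`, as a finset. -/
noncomputable def gammaSet {S T : Type*} [Fintype S] (h : S → T) (t : T) : Finset S :=
  Finset.univ.filter fun s => h s = t

/-- The concretization of every abstract state is nonempty when `h` is surjective. -/
theorem gammaSet_nonempty {S T : Type*} [Fintype S] (h : S → T)
    (hsurj : Function.Surjective h) (t : T) : (gammaSet h t).Nonempty := by
  obtain ⟨s, hs⟩ := hsurj t
  exact ⟨s, by simp [gammaSet, hs]⟩

/-- Abstract transition function of the induced abstract MDP:
`P̂ ŝ α ŝ' = ∑_{s' ∈ γ(ŝ')} P α s'`. -/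
noncomputable def absP {S T : Type*} [Fintype S] (P : S → S → ℝ) (h : S → T)
    (α : S) (t' : T) : ℝ :=
  ∑ s' ∈ gammaSet h t', P α s'

/-- Minimum until value iteration of the induced abstract MDP with avoid set `Ch`
and target set `Bh`. -/
noncomputable def absMinUntil {S T : Type*} [Fintype S] [Fintype T]
    (P : S → S → ℝ) (h : S → T) (hsurj : Function.Surjective h) (Ch Bh : Set T) :
    ℕ → T → ℝ
  | 0, t => if t ∈ Bh then 1 else 0
  | n + 1, t =>
      if t ∈ Bh then 1
      else if t ∈ Ch then 0
      else (gammaSet h t).inf' (gammaSet_nonempty h hsurj t) fun α =>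
        ∑ t' : T, absP P h α t' * absMinUntil P h hsurj Ch Bh n t'

/-- Maximum until value iteration of the induced abstract MDP with avoid set `Ch`
and target set `Bh`. -/
noncomputable def absMaxUntil {S T : Type*} [Fintype S] [Fintype T]
    (P : S → S → ℝ) (h : S → T) (hsurj : Function.Surjective h) (Ch Bh : Set T) :
    ℕ → T → ℝ
  | 0, t => if t ∈ Bh then 1 else 0
  | n + 1, t =>
      if t ∈ Bh then 1
      else if t ∈ Ch then 0
      else (gammaSet h t).sup' (gammaSet_nonempty h hsurj t) fun α =>
        ∑ t' : T, absP P h α t' * absMaxUntil P h hsurj Ch Bh n t'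

/-- n-step constrained reachability values for the until property ¬C U B in the
concrete DTMC. -/
noncomputable def untilN {S : Type*} [Fintype S] (P : S → S → ℝ) (C B : Set S) :
    ℕ → S → ℝ
  | 0, s => if s ∈ B then 1 else 0
  | n + 1, s =>
      if s ∈ B then 1 else if s ∈ C then 0 else ∑ s' : S, P s s' * untilN P C B n s'


lemma sum_absP_mul {S T : Type*} [Fintype S] [Fintype T] (P : S → S → ℝ) (h : S → T)
    (α : S) (f : T → ℝ) :
    ∑ t' : T, absP P h α t' * f t' = ∑ s' : S, P α s' * f (h s') := by
  unfold absP gammaSet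
  rw [← Finset.sum_fiberwise Finset.univ h (fun s' => P α s' * f (h s'))]
  refine Finset.sum_congr rfl fun t' _ => ?_
  rw [Finset.sum_mul]
  refine Finset.sum_congr rfl fun s' hs' => ?_
  simp only [Finset.mem_filter] at hs'
  rw [hs'.2]

lemma untilN_bounds {S : Type*} [Fintype S] (P : S → S → ℝ)
    (hP : ∀ s s' : S, 0 ≤ P s s') (hsum : ∀ s : S, ∑ s' : S, P s s' = 1)
    (C B : Set S) : ∀ n s, 0 ≤ untilN P C B n s ∧ untilN P C B n s ≤ 1 := by
  intro n
  induction n with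
  | zero => intro s; unfold untilN; split <;> norm_num
  | succ n ih =>
    intro s
    unfold untilN
    split
    · norm_num
    split
    · norm_num
    constructor
    · exact Finset.sum_nonneg fun s' _ => mul_nonneg (hP s s') (ih s').1
    · calc ∑ s' : S, P s s' * untilN P C B n s' ≤ ∑ s' : S, P s s' * 1 :=
            Finset.sum_le_sum fun s' _ => mul_le_mul_of_nonneg_left (ih s').2 (hP s s')
        _ = 1 := by simp [hsum s]

lemma absMinUntil_le_untilN {S T : Type*} [Fintype S] [Fintype T]
    (P : S → S → ℝ) (hP : ∀ s s' : S, 0 ≤ P s s')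
    (h : S → T) (hsurj : Function.Surjective h)
    (C E : Set S) (hsatC : C = h ⁻¹' (h '' C)) (hsatE : E = h ⁻¹' (h '' E)) :
    ∀ n s, absMinUntil P h hsurj (h '' E) (h '' C) n (h s) ≤ untilN P E C n s := by
  have hC : ∀ s : S, h s ∈ h '' C ↔ s ∈ C :=
    fun s => ⟨fun hh => by rw [hsatC]; exact hh, fun hh => Set.mem_image_of_mem h hh⟩
  have hE : ∀ s : S, h s ∈ h '' E ↔ s ∈ E :=
    fun s => ⟨fun hh => by rw [hsatE]; exact hh, fun hh => Set.mem_image_of_mem h hh⟩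
  intro n
  induction n with
  | zero =>
    intro s; unfold absMinUntil untilN
    by_cases hc : s ∈ C
    · rw [if_pos ((hC s).mpr hc), if_pos hc]
    · rw [if_neg (fun hh => hc ((hC s).mp hh)), if_neg hc]
  | succ n ih =>
    intro s
    unfold absMinUntil untilN
    by_cases hc : s ∈ C
    · rw [if_pos ((hC s).mpr hc), if_pos hc]
    rw [if_neg (fun hh => hc ((hC s).mp hh)), if_neg hc]
    by_cases he : s ∈ E
    · rw [if_pos ((hE s).mpr he), if_pos he]
    rw [if_neg (fun hh => he ((hE s).mp hh)), if_neg he]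
    have hmem : s ∈ gammaSet h (h s) := by simp [gammaSet]
    calc (gammaSet h (h s)).inf' (gammaSet_nonempty h hsurj (h s))
          (fun α => ∑ t' : T, absP P h α t' * absMinUntil P h hsurj (h '' E) (h '' C) n t')
        ≤ ∑ t' : T, absP P h s t' * absMinUntil P h hsurj (h '' E) (h '' C) n t' :=
          Finset.inf'_le _ hmem
      _ = ∑ s' : S, P s s' * absMinUntil P h hsurj (h '' E) (h '' C) n (h s') :=
          sum_absP_mul P h s _
      _ ≤ ∑ s' : S, P s s' * untilN P E C n s' :=
          Finset.sum_le_sum fun s' _ => mul_le_mul_of_nonneg_left (ih s') (hP s s')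

lemma untilN_le_absMaxUntil {S T : Type*} [Fintype S] [Fintype T]
    (P : S → S → ℝ) (hP : ∀ s s' : S, 0 ≤ P s s')
    (h : S → T) (hsurj : Function.Surjective h)
    (C E : Set S) (hsatC : C = h ⁻¹' (h '' C)) (hsatE : E = h ⁻¹' (h '' E)) :
    ∀ n s, untilN P C E n s ≤ absMaxUntil P h hsurj (h '' C) (h '' E) n (h s) := by
  have hC : ∀ s : S, h s ∈ h '' C ↔ s ∈ C :=
    fun s => ⟨fun hh => by rw [hsatC]; exact hh, fun hh => Set.mem_image_of_mem h hh⟩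
  have hE : ∀ s : S, h s ∈ h '' E ↔ s ∈ E :=
    fun s => ⟨fun hh => by rw [hsatE]; exact hh, fun hh => Set.mem_image_of_mem h hh⟩
  intro n
  induction n with
  | zero =>
    intro s; unfold absMaxUntil untilN
    by_cases he : s ∈ E
    · rw [if_pos ((hE s).mpr he), if_pos he]
    · rw [if_neg (fun hh => he ((hE s).mp hh)), if_neg he]
  | succ n ih =>
    intro s
    unfold absMaxUntil untilN
    by_cases he : s ∈ E
    · rw [if_pos ((hE s).mpr he), if_pos he]
    rw [if_neg (fun hh => he ((hE s).mp hh)), if_neg he]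
    by_cases hc : s ∈ C
    · rw [if_pos ((hC s).mpr hc), if_pos hc]
    rw [if_neg (fun hh => hc ((hC s).mp hh)), if_neg hc]
    have hmem : s ∈ gammaSet h (h s) := by simp [gammaSet]
    calc ∑ s' : S, P s s' * untilN P C E n s'
        ≤ ∑ s' : S, P s s' * absMaxUntil P h hsurj (h '' C) (h '' E) n (h s') :=
          Finset.sum_le_sum fun s' _ => mul_le_mul_of_nonneg_left (ih s') (hP s s')
      _ = ∑ t' : T, absP P h s t' * absMaxUntil P h hsurj (h '' C) (h '' E) n t' :=
          (sum_absP_mul P h s _).symm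
      _ ≤ (gammaSet h (h s)).sup' (gammaSet_nonempty h hsurj (h s))
          (fun α => ∑ t' : T, absP P h α t' * absMaxUntil P h hsurj (h '' C) (h '' E) n t') :=
          Finset.le_sup' (fun α => ∑ t' : T, absP P h α t' * absMaxUntil P h hsurj (h '' C) (h '' E) n t') hmem

lemma absMaxUntil_le_one {S T : Type*} [Fintype S] [Fintype T]
    (P : S → S → ℝ) (hP : ∀ s s' : S, 0 ≤ P s s') (hsum : ∀ s : S, ∑ s' : S, P s s' = 1)
    (h : S → T) (hsurj : Function.Surjective h) (Ch Bh : Set T) :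
    ∀ n t, 0 ≤ absMaxUntil P h hsurj Ch Bh n t ∧ absMaxUntil P h hsurj Ch Bh n t ≤ 1 := by
  have habs : ∀ α : S, ∑ t' : T, absP P h α t' = 1 := by
    intro α
    have := sum_absP_mul P h α (fun _ => 1)
    simpa [hsum α] using this
  have habsnn : ∀ (α : S) (t' : T), 0 ≤ absP P h α t' := fun α t' =>
    Finset.sum_nonneg fun s' _ => hP α s'
  intro n
  induction n with
  | zero => intro t; unfold absMaxUntil; split <;> norm_num
  | succ n ih =>
    intro t
    unfold absMaxUntil
    split
    · norm_num
    split
    · norm_num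
    obtain ⟨α₀, hα₀⟩ := gammaSet_nonempty h hsurj t
    constructor
    · refine le_trans ?_ (Finset.le_sup' _ hα₀)
      exact Finset.sum_nonneg fun t' _ => mul_nonneg (habsnn α₀ t') (ih t').1
    · refine Finset.sup'_le _ _ fun α _ => ?_
      calc ∑ t' : T, absP P h α t' * absMaxUntil P h hsurj Ch Bh n t'
          ≤ ∑ t' : T, absP P h α t' * 1 :=
            Finset.sum_le_sum fun t' _ => mul_le_mul_of_nonneg_left (ih t').2 (habsnn α t')
        _ = 1 := by simp [habs α]


/-- Soundness of the abstraction for condition PC2: let (S, P) be a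
finite DTMC, h : S → Ŝ a surjective abstraction function, and C, E ⊆ S h-saturated
cause and effect sets with Ĉ = h(C) and Ê = h(E). Suppose that in the induced
abstract MDP, for abstract states ŝ, ŝ', the limit of the minimum until value
iteration with avoid set Ê and target Ĉ at ŝ strictly exceeds the limit of the
maximum until value iteration with avoid set Ĉ and target Ê at ŝ'. Then for every
concrete state s with h(s) = ŝ and every concrete state s' with h(s') = ŝ', the
concrete probability of satisfying ¬E U C from s strictly exceeds the concrete
probability of satisfying ¬C U E from s'. -/
theorem abstraction_sound_PC2 {S T : Type*}
    [Fintype S] [Nonempty S] [Fintype T]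
    (P : S → S → ℝ)
    (hP : ∀ s s' : S, 0 ≤ P s s')
    (hsum : ∀ s : S, ∑ s' : S, P s s' = 1)
    (h : S → T) (hsurj : Function.Surjective h)
    (C E : Set S) (hsatC : C = h ⁻¹' (h '' C)) (hsatE : E = h ⁻¹' (h '' E))
    (t t' : T)
    (hgt : (⨆ n : ℕ, absMaxUntil P h hsurj (h '' C) (h '' E) n t') <
        ⨆ n : ℕ, absMinUntil P h hsurj (h '' E) (h '' C) n t) :
    ∀ s s' : S, h s = t → h s' = t' →
      (⨆ n : ℕ, untilN P C E n s') < ⨆ n : ℕ, untilN P E C n s := by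
  intro s s' hs hs'
  have bdd1 : BddAbove (Set.range fun n => absMaxUntil P h hsurj (h '' C) (h '' E) n t') :=
    ⟨1, by rintro x ⟨n, rfl⟩
           exact (absMaxUntil_le_one P hP hsum h hsurj _ _ n t').2⟩
  have bdd2 : BddAbove (Set.range fun n => untilN P E C n s) :=
    ⟨1, by rintro x ⟨n, rfl⟩
           exact (untilN_bounds P hP hsum E C n s).2⟩
  have h1 : (⨆ n : ℕ, untilN P C E n s') ≤
      ⨆ n : ℕ, absMaxUntil P h hsurj (h '' C) (h '' E) n t' := by
    refine ciSup_le fun n => ?_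
    calc untilN P C E n s' ≤ absMaxUntil P h hsurj (h '' C) (h '' E) n (h s') :=
          untilN_le_absMaxUntil P hP h hsurj C E hsatC hsatE n s'
      _ = absMaxUntil P h hsurj (h '' C) (h '' E) n t' := by rw [hs']
      _ ≤ _ := le_ciSup bdd1 n
  have h2 : (⨆ n : ℕ, absMinUntil P h hsurj (h '' E) (h '' C) n t) ≤
      ⨆ n : ℕ, untilN P E C n s := by
    refine ciSup_le fun n => ?_
    calc absMinUntil P h hsurj (h '' E) (h '' C) n t
        = absMinUntil P h hsurj (h '' E) (h '' C) n (h s) := by rw [hs]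
      _ ≤ untilN P E C n s := absMinUntil_le_untilN P hP h hsurj C E hsatC hsatE n s
      _ ≤ _ := le_ciSup bdd2 n
  exact lt_of_le_of_lt h1 (lt_of_lt_of_le hgt h2)
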